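/- Let S be a finite simple group and G a finite group. Let A and B be finite sets of the same cardinality, let F_A and F_B be the free groups on A and B, and let φ : F_A → G and ψ : F_B → G be surjective homomorphisms with kernels R = ker φ and T = ker ψ. Then the quotients F_A/R(S) and F_B/T(S) are isomorphic as groups. (Thus, as a mere group, the universal S-extension G^{A,S} = F_A/R(S) depends only on G, S and the cardinality |A|, and not on the choice of the generating map.) -/

import Mathlib

/-- `simpleResidual R S` is `R(S)`: the intersection of all normal subgroups
`N` of `R` such that `R/N` is isomorphic to a finite direct power `S^k` of `S`
(equivalently, `N` is the kernel of a surjective homomorphism `R →* S^k`). -/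
def simpleResidual (R : Type*) [Group R] (S : Type*) [Group S] : Subgroup R :=
  sInf {N : Subgroup R |
    ∃ (k : ℕ) (f : R →* (Fin k → S)), Function.Surjective f ∧ N = f.ker}

/-- For a subgroup `R` of a group `F`, the subgroup `R(S)` of `F`: the
image in `F` of the intersection of all normal subgroups of `R` whose quotient
is a finite direct power of `S`. -/
def relResidual {F : Type*} [Group F] (R : Subgroup F) (S : Type*) [Group S] :
    Subgroup F :=
  Subgroup.map R.subtype (simpleResidual R S)

open Function Subgroup

namespace SimpleResidualAux

variable {R : Type*} [Group R] {S : Type*} [Group S]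

/-- The defining set of kernels. -/
def resSet (R : Type*) [Group R] (S : Type*) [Group S] : Set (Subgroup R) :=
  {N : Subgroup R | ∃ (k : ℕ) (f : R →* (Fin k → S)), Function.Surjective f ∧ N = f.ker}

lemma simpleResidual_eq_sInf : simpleResidual R S = sInf (resSet R S) := rfl

lemma simpleResidual_le {N : Subgroup R} (hN : N ∈ resSet R S) :
    simpleResidual R S ≤ N := sInf_le hN

/-- Combining two homs into a hom to a pi over a sum type. -/
def sumArrowHom {k l : ℕ} (f : R →* (Fin k → S)) (g : R →* (Fin l → S)) :
    R →* ((Fin k ⊕ Fin l) → S) where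
  toFun r := Sum.elim (f r) (g r)
  map_one' := by funext i; cases i <;> simp
  map_mul' a b := by funext i; cases i <;> simp

lemma sumArrowHom_ker {k l : ℕ} (f : R →* (Fin k → S)) (g : R →* (Fin l → S)) :
    (sumArrowHom f g).ker = f.ker ⊓ g.ker := by
  ext r
  simp only [MonoidHom.mem_ker, Subgroup.mem_inf]
  constructor
  · intro h
    constructor
    · funext j; exact congrFun h (Sum.inl j)
    · funext j; exact congrFun h (Sum.inr j)
  · rintro ⟨h1, h2⟩
    funext i
    cases i with
    | inl j => exact congrFun h1 j
    | inr j => exact congrFun h2 j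

/-- Prepending a coordinate to a hom into a finite power. -/
def consHom {n : ℕ} (h : R →* S) (g : R →* (Fin n → S)) : R →* (Fin (n + 1) → S) where
  toFun r := Fin.cons (h r) (g r)
  map_one' := by
    funext i
    refine Fin.cases ?_ (fun j => ?_) i <;> simp
  map_mul' a b := by
    funext i
    refine Fin.cases ?_ (fun j => ?_) i <;> simp

lemma consHom_ker {n : ℕ} (h : R →* S) (g : R →* (Fin n → S)) :
    (consHom h g).ker = g.ker ⊓ h.ker := by
  ext r
  simp only [MonoidHom.mem_ker, Subgroup.mem_inf]
  constructor
  · intro hr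
    constructor
    · funext j
      have := congrFun hr j.succ
      simpa [consHom] using this
    · have := congrFun hr 0
      simpa [consHom] using this
  · rintro ⟨h1, h2⟩
    funext i
    refine Fin.cases ?_ (fun j => ?_) i
    · simpa [consHom] using h2
    · simpa [consHom] using congrFun h1 j

/-- Dropping the first coordinate. -/
def tailHom {n : ℕ} (f : R →* (Fin (n + 1) → S)) : R →* (Fin n → S) where
  toFun r := fun i => f r i.succ
  map_one' := by funext i; simp
  map_mul' a b := by funext i; simp

lemma ker_eq_tail_inf_zero {n : ℕ} (f : R →* (Fin (n + 1) → S)) :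
    f.ker = (tailHom f).ker ⊓ ((Pi.evalMonoidHom (fun _ : Fin (n+1) => S) 0).comp f).ker := by
  ext r
  simp only [MonoidHom.mem_ker, Subgroup.mem_inf]
  constructor
  · intro h
    refine ⟨funext fun j => ?_, ?_⟩
    · exact congrFun h j.succ
    · exact congrFun h 0
  · rintro ⟨h1, h2⟩
    funext i
    refine Fin.cases ?_ (fun j => ?_) i
    · exact h2
    · exact congrFun h1 j

/-- Key structural lemma: if every coordinate of `f : R →* S^n` is surjective
(`S` simple), then `ker f` is the kernel of some surjection onto a power of `S`. -/
lemma exists_surj_ker_eq_of_coords [IsSimpleGroup S] :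
    ∀ (n : ℕ) (f : R →* (Fin n → S)), (∀ i, Surjective fun r => f r i) →
      ∃ (k : ℕ) (g : R →* (Fin k → S)), Surjective g ∧ g.ker = f.ker := by
  intro n
  induction n with
  | zero =>
    intro f _
    exact ⟨0, f, fun v => ⟨1, Subsingleton.elim _ _⟩, rfl⟩
  | succ n ih =>
    intro f hf
    obtain ⟨m, g, hg, hker⟩ := ih (tailHom f) (fun i => hf i.succ)
    set f0 : R →* S := (Pi.evalMonoidHom (fun _ : Fin (n+1) => S) 0).comp f with hf0def
    have hf0 : Surjective f0 := hf 0
    have hN : (g.ker.map f0).Normal := by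
      constructor
      rintro s ⟨x, hx, rfl⟩ t
      obtain ⟨r, rfl⟩ := hf0 t
      exact ⟨r * x * r⁻¹, (MonoidHom.normal_ker g).conj_mem x hx r, by
        simp [map_mul]⟩
    rcases hN.eq_bot_or_eq_top with hbot | htop
    · have hle : g.ker ≤ f0.ker := by
        intro x hx
        have hmem : f0 x ∈ g.ker.map f0 := ⟨x, hx, rfl⟩
        rw [hbot, Subgroup.mem_bot] at hmem
        exact hmem
      refine ⟨m, g, hg, ?_⟩
      rw [ker_eq_tail_inf_zero f, ← hf0def, ← hker]
      exact (inf_of_le_left hle).symm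
    · refine ⟨m + 1, consHom f0 g, ?_, ?_⟩
      · intro v
        obtain ⟨r1, hr1⟩ := hg (Fin.tail v)
        have hmem : v 0 * (f0 r1)⁻¹ ∈ g.ker.map f0 := by rw [htop]; trivial
        obtain ⟨x, hx, hxe⟩ := hmem
        refine ⟨x * r1, ?_⟩
        funext i
        refine Fin.cases ?_ (fun j => ?_) i
        · show f0 (x * r1) = v 0
          rw [map_mul, hxe]
          group
        · show g (x * r1) j = v j.succ
          rw [map_mul, hx, one_mul, hr1]
          rfl
      · rw [consHom_ker, hker, ker_eq_tail_inf_zero f, hf0def]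

lemma exists_surj_ker_eq_inf [IsSimpleGroup S] {N₁ N₂ : Subgroup R}
    (h₁ : N₁ ∈ resSet R S) (h₂ : N₂ ∈ resSet R S) :
    ∃ (m : ℕ) (g : R →* (Fin m → S)), Surjective g ∧ g.ker = N₁ ⊓ N₂ := by
  obtain ⟨k, f₁, hf₁, rfl⟩ := h₁
  obtain ⟨l, f₂, hf₂, rfl⟩ := h₂
  set F := sumArrowHom f₁ f₂ with hF
  set e : (Fin k ⊕ Fin l) ≃ Fin (k + l) := finSumFinEquiv
  set π : ((Fin k ⊕ Fin l) → S) ≃* (Fin (k + l) → S) :=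
    MulEquiv.arrowCongr e (MulEquiv.refl S)
  set F' : R →* (Fin (k + l) → S) := π.toMonoidHom.comp F with hF'
  have hcoord : ∀ s : Fin k ⊕ Fin l, Surjective fun r => F r s := by
    intro s
    cases s with
    | inl j => exact (surjective_eval j).comp hf₁
    | inr j => exact (surjective_eval j).comp hf₂
  have hcoord' : ∀ i, Surjective fun r => F' r i := by
    intro i
    have : (fun r => F' r i) = fun r => F r (e.symm i) := by
      funext r; rfl
    rw [this]
    exact hcoord _
  obtain ⟨m, g, hg, hker⟩ := exists_surj_ker_eq_of_coords (k + l) F' hcoord'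
  refine ⟨m, g, hg, ?_⟩
  rw [hker]
  have hkerF' : F'.ker = F.ker := by
    ext r
    simp only [MonoidHom.mem_ker, hF', MonoidHom.comp_apply, MulEquiv.coe_toMonoidHom]
    exact ⟨fun h => π.injective (by simpa using h), fun h => by rw [h]; simp⟩
  rw [hkerF', sumArrowHom_ker]

lemma top_mem_resSet : (⊤ : Subgroup R) ∈ resSet R S := by
  refine ⟨0, 1, fun v => ⟨1, Subsingleton.elim _ _⟩, ?_⟩
  ext r
  simp [MonoidHom.mem_ker, Subsingleton.elim ((1 : R →* (Fin 0 → S)) r) 1]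


lemma hom_finite (R : Type*) [Group R] [Group.FG R] (S : Type*) [Group S] [Finite S] :
    Finite (R →* S) := by
  obtain ⟨T, hclos, hfin⟩ := Group.fg_iff.mp (inferInstance : Group.FG R)
  haveI := hfin.to_subtype
  refine Finite.of_injective (fun f : R →* S => (fun t : T => f t)) ?_
  intro f g h
  refine MonoidHom.eq_of_eqOn_dense hclos ?_
  intro x hx
  exact congrFun h ⟨x, hx⟩

lemma pow_le_of_surj [Finite S] [Nontrivial S] [Group.FG R] {k : ℕ}
    (f : R →* (Fin k → S)) (hf : Surjective f) : k ≤ Nat.card (R →* S) := by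
  haveI := hom_finite R S
  have hinj : Function.Injective
      (fun i : Fin k => (Pi.evalMonoidHom (fun _ : Fin k => S) i).comp f) := by
    intro i j hij
    by_contra hne
    obtain ⟨s, hs⟩ := exists_ne (1 : S)
    obtain ⟨r, hr⟩ := hf (fun t => if t = i then s else 1)
    have h1 : f r i = s := by rw [hr]; simp
    have h2 : f r j = 1 := by rw [hr]; simp [Ne.symm hne]
    have := congrArg (fun φ : R →* S => φ r) hij
    simp only [MonoidHom.comp_apply, Pi.evalMonoidHom_apply] at this
    rw [h1, h2] at this
    exact hs this
  calc k = Nat.card (Fin k) := by simp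
    _ ≤ Nat.card (R →* S) := Nat.card_le_card_of_injective _ hinj

lemma index_ker_eq_pow [Finite S] {k : ℕ} (f : R →* (Fin k → S)) (hf : Surjective f) :
    f.ker.index = Nat.card S ^ k := by
  rw [Subgroup.index_ker, MonoidHom.range_eq_top.mpr hf, Subgroup.card_top, Nat.card_fun]
  simp

lemma eq_of_le_of_index_eq {G : Type*} [Group G] {H K : Subgroup G} (h : H ≤ K)
    (hi : H.index = K.index) (h0 : K.index ≠ 0) : H = K := by
  have := Subgroup.relIndex_mul_index h
  rw [hi] at this
  have h1 : H.relIndex K = 1 := by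
    have h2 : H.relIndex K * K.index = 1 * K.index := by simpa using this
    exact Nat.eq_of_mul_eq_mul_right (Nat.pos_of_ne_zero h0) h2
  exact le_antisymm h (Subgroup.relIndex_eq_one.mp h1)

/-- When `R` is finitely generated, the simple residual is itself the kernel of a
surjection onto a finite power of `S`. -/
lemma residual_spec (R : Type*) [Group R] [Group.FG R]
    (S : Type*) [Group S] [Finite S] [IsSimpleGroup S] :
    ∃ (k : ℕ) (f : R →* (Fin k → S)), Surjective f ∧
      f.ker = sInf (resSet R S) := by
  haveI : Nontrivial S := inferInstance
  set KK : Set ℕ := {k | ∃ f : R →* (Fin k → S), Surjective f} with hKK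
  have h0 : (0 : ℕ) ∈ KK := ⟨1, fun v => ⟨1, Subsingleton.elim _ _⟩⟩
  have hbdd : BddAbove KK := by
    refine ⟨Nat.card (R →* S), ?_⟩
    rintro k ⟨f, hf⟩
    exact pow_le_of_surj f hf
  set k₀ := sSup KK with hk₀
  have hmax : k₀ ∈ KK := Nat.sSup_mem ⟨0, h0⟩ hbdd
  obtain ⟨f₀, hf₀⟩ := hmax
  have hScard : Nat.card S ≠ 0 := Nat.card_ne_zero.mpr ⟨inferInstance, inferInstance⟩
  have hSone : 1 ≤ Nat.card S := Nat.one_le_iff_ne_zero.mpr hScard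
  refine ⟨k₀, f₀, hf₀, ?_⟩
  refine le_antisymm (le_sInf ?_) (sInf_le ⟨k₀, f₀, hf₀, rfl⟩)
  rintro N hN
  have hmem₀ : f₀.ker ∈ resSet R S := ⟨k₀, f₀, hf₀, rfl⟩
  obtain ⟨m, g, hg, hkerg⟩ := exists_surj_ker_eq_inf hmem₀ hN
  have hm : m ≤ k₀ := le_csSup hbdd ⟨g, hg⟩
  have hle : g.ker ≤ f₀.ker := hkerg ▸ inf_le_left
  have hieq : g.ker.index = f₀.ker.index := by
    have h1 : g.ker.index = Nat.card S ^ m := index_ker_eq_pow g hg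
    have h2 : f₀.ker.index = Nat.card S ^ k₀ := index_ker_eq_pow f₀ hf₀
    have hdvd : f₀.ker.index ∣ g.ker.index := Subgroup.index_dvd_of_le hle
    have hlei : g.ker.index ≤ f₀.ker.index := by
      rw [h1, h2]
      exact Nat.pow_le_pow_right hSone hm
    have hne : g.ker.index ≠ 0 := by
      rw [h1]; exact pow_ne_zero _ hScard
    exact le_antisymm hlei (Nat.le_of_dvd (Nat.pos_of_ne_zero hne) hdvd)
  have : g.ker = f₀.ker := eq_of_le_of_index_eq hle hieq
    (by rw [index_ker_eq_pow f₀ hf₀]; exact pow_ne_zero _ hScard)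
  rw [← this, hkerg]
  exact inf_le_right


end SimpleResidualAux

namespace GaschutzAux

open scoped Classical

variable {Q : Type*} [Group Q] {G : Type*} [Group G] {B : Type*}

section defs
variable [Fintype Q] [Fintype B] (π : Q →* G)

/-- Lifts of `g` lying inside `H`. -/
noncomputable def Lset (H : Subgroup Q) (g : B → G) : Finset (B → Q) :=
  Finset.univ.filter (fun q => (∀ b, q b ∈ H) ∧ ∀ b, π (q b) = g b)

/-- Lifts of `g` generating exactly `H`. -/
noncomputable def Eset (H : Subgroup Q) (g : B → G) : Finset (B → Q) :=
  Finset.univ.filter (fun q => Subgroup.closure (Set.range q) = H ∧ ∀ b, π (q b) = g b)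

lemma card_Lset_eq (H : Subgroup Q) {g g' : B → G}
    (hg : ∀ b, ∃ h ∈ H, π h = g b) (hg' : ∀ b, ∃ h ∈ H, π h = g' b) :
    (Lset π H g).card = (Lset π H g').card := by
  choose l hlH hl using hg
  choose l' hl'H hl' using hg'
  refine Finset.card_bij' (fun q _ => fun b => l' b * (l b)⁻¹ * q b)
    (fun q _ => fun b => l b * (l' b)⁻¹ * q b) ?_ ?_ ?_ ?_
  · intro q hq
    simp only [Lset, Finset.mem_filter, Finset.mem_univ, true_and] at hq ⊢
    refine ⟨fun b => ?_, fun b => ?_⟩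
    · exact H.mul_mem (H.mul_mem (hl'H b) (H.inv_mem (hlH b))) (hq.1 b)
    · rw [map_mul, map_mul, map_inv, hl, hl', hq.2 b]
      group
  · intro q hq
    simp only [Lset, Finset.mem_filter, Finset.mem_univ, true_and] at hq ⊢
    refine ⟨fun b => ?_, fun b => ?_⟩
    · exact H.mul_mem (H.mul_mem (hlH b) (H.inv_mem (hl'H b))) (hq.1 b)
    · rw [map_mul, map_mul, map_inv, hl, hl', hq.2 b]
      group
  · intro q _; funext b; group
  · intro q _; funext b; group

lemma Lset_card_eq_sum (H : Subgroup Q) (g : B → G) :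
    (Lset π H g).card =
      ∑ K ∈ Finset.univ.filter (fun K : Subgroup Q => K ≤ H), (Eset π K g).card := by
  have h1 := Finset.card_eq_sum_card_fiberwise (s := Lset π H g)
    (t := Finset.univ.filter (fun K : Subgroup Q => K ≤ H))
    (f := fun q => Subgroup.closure (Set.range q)) (by
      intro q hq
      simp only [Finset.mem_coe, Lset, Finset.mem_filter, Finset.mem_univ, true_and] at hq
      simp only [Finset.mem_coe, Finset.mem_filter, Finset.mem_univ, true_and]
      exact (Subgroup.closure_le H).mpr (Set.range_subset_iff.mpr hq.1))
  rw [h1]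
  refine Finset.sum_congr rfl ?_
  intro K hK
  simp only [Finset.mem_filter, Finset.mem_univ, true_and] at hK
  congr 1
  ext q
  simp only [Lset, Eset, Finset.mem_filter, Finset.mem_univ, true_and]
  constructor
  · rintro ⟨⟨_, hπ⟩, hcl⟩
    exact ⟨hcl, hπ⟩
  · rintro ⟨hcl, hπ⟩
    refine ⟨⟨fun b => ?_, hπ⟩, hcl⟩
    exact hK (hcl ▸ Subgroup.subset_closure (Set.mem_range_self b))

lemma Eset_empty_of_not_gen {K : Subgroup Q} {g : B → G}
    (hg : Subgroup.closure (Set.range g) = ⊤) (hK : K.map π ≠ ⊤) :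
    Eset π K g = ∅ := by
  rw [Finset.eq_empty_iff_forall_notMem]
  intro q hq
  simp only [Eset, Finset.mem_filter, Finset.mem_univ, true_and] at hq
  apply hK
  rw [← hq.1, MonoidHom.map_closure, ← Set.range_comp]
  have : π ∘ q = g := funext hq.2
  rw [this, hg]

lemma Eset_card_indep (n : ℕ) :
    ∀ (H : Subgroup Q), Nat.card H = n → H.map π = ⊤ →
    ∀ (g g' : B → G), Subgroup.closure (Set.range g) = ⊤ →
      Subgroup.closure (Set.range g') = ⊤ →
      (Eset π H g).card = (Eset π H g').card := by
  induction n using Nat.strong_induction_on with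
  | _ n ih =>
    intro H hn hH g g' hg hg'
    have hlift : ∀ (g₀ : B → G), (∀ b, ∃ h ∈ H, π h = g₀ b) := by
      intro g₀ b
      have : g₀ b ∈ H.map π := hH ▸ Subgroup.mem_top _
      obtain ⟨h, hh, hπ⟩ := this
      exact ⟨h, hh, hπ⟩
    have hLL : (Lset π H g).card = (Lset π H g').card :=
      card_Lset_eq π H (hlift g) (hlift g')
    rw [Lset_card_eq_sum, Lset_card_eq_sum] at hLL
    have hHmem : H ∈ Finset.univ.filter (fun K : Subgroup Q => K ≤ H) := by
      simp
    rw [← Finset.add_sum_erase _ _ hHmem, ← Finset.add_sum_erase _ _ hHmem] at hLL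
    have hrest : ∀ K ∈ (Finset.univ.filter (fun K : Subgroup Q => K ≤ H)).erase H,
        (Eset π K g).card = (Eset π K g').card := by
      intro K hK
      rw [Finset.mem_erase, Finset.mem_filter] at hK
      obtain ⟨hne, -, hle⟩ := hK
      by_cases hKt : K.map π = ⊤
      · refine ih (Nat.card K) ?_ K rfl hKt g g' hg hg'
        rw [← hn]
        have hlt : (K : Set Q) ⊂ (H : Set Q) :=
          HasSubset.Subset.ssubset_of_ne hle (by
            intro hcontra
            exact hne (SetLike.coe_injective hcontra))
        exact Set.Finite.card_lt_card (H : Set Q).toFinite hlt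
      · rw [Eset_empty_of_not_gen π hg hKt, Eset_empty_of_not_gen π hg' hKt]
    rw [Finset.sum_congr rfl hrest] at hLL
    exact Nat.add_right_cancel hLL

end defs

/-- **Gaschütz's lemma** (lifting generating families through surjections of
finite groups). -/
lemma gaschutz {Q : Type*} [Group Q] [Finite Q] {G : Type*} [Group G] {B : Type*} [Finite B]
    (π : Q →* G) (hπ : Surjective π)
    (q₀ : B → Q) (hq₀ : Subgroup.closure (Set.range q₀) = ⊤)
    (g : B → G) (hg : Subgroup.closure (Set.range g) = ⊤) :
    ∃ q : B → Q, Subgroup.closure (Set.range q) = ⊤ ∧ ∀ b, π (q b) = g b := by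
  haveI : Fintype Q := Fintype.ofFinite Q
  haveI : Fintype B := Fintype.ofFinite B
  set g' : B → G := fun b => π (q₀ b) with hg'def
  have hg' : Subgroup.closure (Set.range g') = ⊤ := by
    have : Set.range g' = π '' Set.range q₀ := by
      rw [hg'def]
      exact (Set.range_comp π q₀).symm ▸ rfl
    rw [this, ← MonoidHom.map_closure, hq₀, ← MonoidHom.range_eq_map,
      MonoidHom.range_eq_top.mpr hπ]
  have htopmap : (⊤ : Subgroup Q).map π = ⊤ := by
    rw [← MonoidHom.range_eq_map, MonoidHom.range_eq_top.mpr hπ]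
  have hcard := Eset_card_indep π (Nat.card (⊤ : Subgroup Q)) ⊤ rfl htopmap g g' hg hg'
  have hne : (Eset π ⊤ g').Nonempty := ⟨q₀, by simp [Eset, hq₀, hg'def]⟩
  have : (Eset π ⊤ g).Nonempty := by
    rw [← Finset.card_pos] at hne ⊢
    omega
  obtain ⟨q, hq⟩ := this
  simp only [Eset, Finset.mem_filter, Finset.mem_univ, true_and] at hq
  exact ⟨q, hq.1, hq.2⟩

end GaschutzAux

namespace SimpleResidualAux

lemma mem_simpleResidual_of_equiv {R R' : Type*} [Group R] [Group R'] {S : Type*} [Group S]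
    (e : R ≃* R') {x : R} (hx : x ∈ simpleResidual R S) : e x ∈ simpleResidual R' S := by
  rw [simpleResidual, Subgroup.mem_sInf] at hx ⊢
  rintro N ⟨k, f, hf, rfl⟩
  have hmem := hx (MonoidHom.ker (f.comp e.toMonoidHom))
    ⟨k, f.comp e.toMonoidHom, hf.comp e.surjective, rfl⟩
  exact hmem

instance relResidual_normal {F : Type*} [Group F] (R : Subgroup F) [R.Normal]
    (S : Type*) [Group S] : (relResidual R S).Normal := by
  constructor
  intro n hn g
  obtain ⟨y, hy, rfl⟩ := hn
  refine ⟨(MulAut.conjNormal g : MulAut R) y,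
    mem_simpleResidual_of_equiv (MulAut.conjNormal g : MulAut R) hy, ?_⟩
  simp [MulAut.conjNormal_apply]

lemma relResidual_le {F : Type*} [Group F] (R : Subgroup F) (S : Type*) [Group S] :
    relResidual R S ≤ R := by
  rintro x ⟨y, _, rfl⟩
  exact y.2

lemma comap_subtype_relResidual {F : Type*} [Group F] (R : Subgroup F) (S : Type*) [Group S] :
    Subgroup.comap R.subtype (relResidual R S) = simpleResidual R S :=
  Subgroup.comap_map_eq_self_of_injective R.subtype_injective _

lemma index_relResidual {F : Type*} [Group F] (R : Subgroup F) (S : Type*) [Group S] :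
    (relResidual R S).index = (simpleResidual R S).index * R.index :=
  Subgroup.index_map_subtype _

lemma freeGroup_fg (A : Type*) [Finite A] : Group.FG (FreeGroup A) :=
  Group.fg_iff.mpr ⟨Set.range FreeGroup.of, FreeGroup.closure_range_of A, Set.finite_range _⟩

lemma ker_finiteIndex {F G : Type*} [Group F] [Group G] [Finite G] (φ : F →* G) :
    φ.ker.FiniteIndex := by
  constructor
  rw [Subgroup.index_ker]
  exact Nat.card_ne_zero.mpr ⟨⟨1⟩, inferInstance⟩

lemma simpleResidual_spec (R : Type*) [Group R] [Group.FG R]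
    (S : Type*) [Group S] [Finite S] [IsSimpleGroup S] :
    ∃ (k : ℕ) (f : R →* (Fin k → S)), Surjective f ∧ f.ker = simpleResidual R S :=
  residual_spec R S

lemma relResidual_finiteIndex {F : Type*} [Group F] [Group.FG F]
    (S : Type*) [Group S] [Finite S] [IsSimpleGroup S]
    (R : Subgroup F) [R.FiniteIndex] : (relResidual R S).FiniteIndex := by
  obtain ⟨k, f, hf, hker⟩ := simpleResidual_spec R S
  constructor
  rw [index_relResidual, ← hker, index_ker_eq_pow f hf]
  have hScard : Nat.card S ≠ 0 := Nat.card_ne_zero.mpr ⟨inferInstance, inferInstance⟩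
  exact Nat.mul_ne_zero (pow_ne_zero _ hScard) Subgroup.FiniteIndex.index_ne_zero

/-- The key lifting lemma: a surjection `F_B ↠ F_A/R(S)` over `G` whose kernel
contains `T(S)`. -/
lemma exists_lift (S : Type) [Group S] [Finite S] [IsSimpleGroup S]
    (G : Type) [Group G] [Finite G]
    (A B : Type) [Finite A] [Finite B] (e : A ≃ B)
    (φ : FreeGroup A →* G) (ψ : FreeGroup B →* G)
    (hφ : Surjective φ) (hψ : Surjective ψ) :
    ∃ g : FreeGroup B →* (FreeGroup A ⧸ relResidual φ.ker S),
      Surjective g ∧ relResidual ψ.ker S ≤ g.ker := by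
  haveI : Group.FG (FreeGroup A) := freeGroup_fg A
  haveI : φ.ker.FiniteIndex := ker_finiteIndex φ
  haveI : ψ.ker.FiniteIndex := ker_finiteIndex ψ
  haveI hDfi : (relResidual φ.ker S).FiniteIndex := relResidual_finiteIndex S _
  set D := relResidual φ.ker S with hD
  set f : FreeGroup A →* FreeGroup A ⧸ D := QuotientGroup.mk' D with hf
  have hfsurj : Surjective f := QuotientGroup.mk'_surjective D
  have hDle : D ≤ φ.ker := relResidual_le _ _
  set ε : (FreeGroup A ⧸ D) →* G :=
    QuotientGroup.lift D φ (fun x hx => MonoidHom.mem_ker.mp (hDle hx)) with hε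
  have hεf : ∀ x, ε (f x) = φ x := fun x => rfl
  have hεsurj : Surjective ε := by
    intro y
    obtain ⟨x, rfl⟩ := hφ y
    exact ⟨f x, hεf x⟩
  haveI : Finite (FreeGroup A ⧸ D) := Subgroup.finite_quotient_of_finiteIndex
  -- generating families
  have hq₀ : Subgroup.closure
      (Set.range (fun b : B => f (FreeGroup.of (e.symm b)))) = ⊤ := by
    have h1 : Set.range (fun b : B => f (FreeGroup.of (e.symm b)))
        = f '' (Set.range FreeGroup.of) := by
      ext x
      constructor
      · rintro ⟨b, rfl⟩; exact ⟨FreeGroup.of (e.symm b), ⟨_, rfl⟩, rfl⟩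
      · rintro ⟨y, ⟨a, rfl⟩, rfl⟩; exact ⟨e a, by simp⟩
    rw [h1, ← MonoidHom.map_closure, FreeGroup.closure_range_of,
      ← MonoidHom.range_eq_map, MonoidHom.range_eq_top.mpr hfsurj]
  have hgen : Subgroup.closure (Set.range (fun b : B => ψ (FreeGroup.of b))) = ⊤ := by
    have h1 : Set.range (fun b : B => ψ (FreeGroup.of b))
        = ψ '' (Set.range FreeGroup.of) := by
      ext x
      constructor
      · rintro ⟨b, rfl⟩; exact ⟨FreeGroup.of b, ⟨_, rfl⟩, rfl⟩
      · rintro ⟨y, ⟨a, rfl⟩, rfl⟩; exact ⟨a, rfl⟩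
    rw [h1, ← MonoidHom.map_closure, FreeGroup.closure_range_of,
      ← MonoidHom.range_eq_map, MonoidHom.range_eq_top.mpr hψ]
  obtain ⟨q, hqgen, hqlift⟩ := GaschutzAux.gaschutz ε hεsurj _ hq₀ _ hgen
  set g : FreeGroup B →* FreeGroup A ⧸ D := FreeGroup.lift q with hg
  have hgsurj : Surjective g := by
    rw [← MonoidHom.range_eq_top, hg, FreeGroup.range_lift_eq_closure, hqgen]
  have hcomm : ∀ x, ε (g x) = ψ x := by
    have : ε.comp g = ψ := FreeGroup.ext_hom _ _ (fun b => by
      simp only [MonoidHom.comp_apply, hg]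
      rw [FreeGroup.lift_apply_of]
      exact hqlift b)
    intro x
    rw [← this]; rfl
  -- the restriction of `f` to `R`
  set p : ↥φ.ker →* (FreeGroup A ⧸ D) := f.comp φ.ker.subtype with hp
  have hkerp : p.ker = simpleResidual ↥φ.ker S := by
    rw [hp, ← MonoidHom.comap_ker]
    have : f.ker = D := QuotientGroup.ker_mk' D
    rw [this, hD, comap_subtype_relResidual]
  have hrangep : p.range = ε.ker := by
    apply le_antisymm
    · rintro x ⟨r, rfl⟩
      rw [MonoidHom.mem_ker]
      have := hεf (φ.ker.subtype r)
      rw [hp]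
      simpa [MonoidHom.mem_ker.mp r.2] using this
    · intro x hx
      obtain ⟨a, rfl⟩ := hfsurj x
      have ha : a ∈ φ.ker := by
        rw [MonoidHom.mem_ker, ← hεf a]
        exact hx
      exact ⟨⟨a, ha⟩, rfl⟩
  obtain ⟨k, σ, hσ, hσker⟩ := simpleResidual_spec ↥φ.ker S
  have hkereq : p.ker = σ.ker := by rw [hkerp, hσker]
  set δ : ↥p.range ≃* (Fin k → S) :=
    ((QuotientGroup.quotientKerEquivRange p).symm.trans
      (QuotientGroup.quotientMulEquivOfEq hkereq)).trans
      (QuotientGroup.quotientKerEquivOfSurjective σ hσ) with hδ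
  -- g maps ψ.ker into p.range
  have hrange : ∀ t, t ∈ ψ.ker → g t ∈ p.range := by
    intro t ht
    rw [hrangep, MonoidHom.mem_ker, hcomm t]
    exact MonoidHom.mem_ker.mp ht
  set η : ↥ψ.ker →* ↥p.range :=
    (g.comp ψ.ker.subtype).codRestrict p.range (fun t => hrange _ t.2) with hη
  have hηsurj : Surjective η := by
    rintro y
    obtain ⟨w, hw⟩ := hgsurj ↑y
    have hεy : ε ↑y = 1 := MonoidHom.mem_ker.mp (hrangep.le y.2)
    have hw' : w ∈ ψ.ker := by
      rw [MonoidHom.mem_ker, ← hcomm w, hw]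
      exact hεy
    refine ⟨⟨w, hw'⟩, Subtype.ext ?_⟩
    simpa [hη] using hw
  set θ : ↥ψ.ker →* (Fin k → S) := δ.toMonoidHom.comp η with hθ
  have hθsurj : Surjective θ := δ.surjective.comp hηsurj
  have hθker : θ.ker = Subgroup.comap ψ.ker.subtype g.ker := by
    ext t
    simp only [hθ, MonoidHom.mem_ker, MonoidHom.comp_apply, Subgroup.mem_comap,
      MulEquiv.coe_toMonoidHom]
    rw [← MulEquiv.map_one δ]
    rw [δ.injective.eq_iff]
    constructor
    · intro h
      have := congrArg (Subtype.val) h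
      simpa [hη] using this
    · intro h
      apply Subtype.ext
      simpa [hη] using h
  have hres : simpleResidual ↥ψ.ker S ≤ θ.ker :=
    simpleResidual_le ⟨k, θ, hθsurj, rfl⟩
  refine ⟨g, hgsurj, ?_⟩
  have hfin : simpleResidual ↥ψ.ker S ≤ Subgroup.comap ψ.ker.subtype g.ker := hθker ▸ hres
  calc relResidual ψ.ker S
      = Subgroup.map ψ.ker.subtype (simpleResidual ↥ψ.ker S) := rfl
    _ ≤ Subgroup.map ψ.ker.subtype (Subgroup.comap ψ.ker.subtype g.ker) :=
        Subgroup.map_mono hfin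
    _ ≤ g.ker := Subgroup.map_comap_le _ _

end SimpleResidualAux

/-- As a mere group, the universal `S`-extension
`G^{A,S} = F_A/R(S)` depends only on `G`, `S` and `|A|`: if `|A| = |B|` and
`φ : F_A ↠ G`, `ψ : F_B ↠ G` are surjections with kernels `R`, `T`, then
`F_A/R(S) ≅ F_B/T(S)` (expressed by a common quotient group `C`). -/
theorem universal_S_extension_independent_of_generators
    (S : Type) [Group S] [Finite S] [IsSimpleGroup S]
    (G : Type) [Group G] [Finite G]
    (A B : Type) [Finite A] [Finite B] (hAB : Nonempty (A ≃ B))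
    (φ : FreeGroup A →* G) (ψ : FreeGroup B →* G)
    (hφ : Function.Surjective φ) (hψ : Function.Surjective ψ) :
    ∃ (C : Type) (_ : Group C) (f : FreeGroup A →* C) (g : FreeGroup B →* C),
      Function.Surjective f ∧ Function.Surjective g ∧
      MonoidHom.ker f = relResidual φ.ker S ∧
      MonoidHom.ker g = relResidual ψ.ker S := by
  obtain ⟨e⟩ := hAB
  haveI : Group.FG (FreeGroup A) := SimpleResidualAux.freeGroup_fg A
  haveI : Group.FG (FreeGroup B) := SimpleResidualAux.freeGroup_fg B
  haveI : φ.ker.FiniteIndex := SimpleResidualAux.ker_finiteIndex φ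
  haveI : ψ.ker.FiniteIndex := SimpleResidualAux.ker_finiteIndex ψ
  haveI hDA : (relResidual φ.ker S).FiniteIndex :=
    SimpleResidualAux.relResidual_finiteIndex S _
  haveI hDB : (relResidual ψ.ker S).FiniteIndex :=
    SimpleResidualAux.relResidual_finiteIndex S _
  obtain ⟨g, hgsurj, hgker⟩ := SimpleResidualAux.exists_lift S G A B e φ ψ hφ hψ
  obtain ⟨g', hg'surj, hg'ker⟩ := SimpleResidualAux.exists_lift S G B A e.symm ψ φ hψ hφ
  have hkg : g.ker.index = (relResidual φ.ker S).index := by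
    rw [Subgroup.index_ker, MonoidHom.range_eq_top.mpr hgsurj, Subgroup.card_top]
    exact (Subgroup.index_eq_card _).symm
  have hkg' : g'.ker.index = (relResidual ψ.ker S).index := by
    rw [Subgroup.index_ker, MonoidHom.range_eq_top.mpr hg'surj, Subgroup.card_top]
    exact (Subgroup.index_eq_card _).symm
  have hd1 : (relResidual φ.ker S).index ∣ (relResidual ψ.ker S).index := by
    rw [← hkg]
    exact Subgroup.index_dvd_of_le hgker
  have hd2 : (relResidual ψ.ker S).index ∣ (relResidual φ.ker S).index := by
    rw [← hkg']
    exact Subgroup.index_dvd_of_le hg'ker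
  have hieq : (relResidual ψ.ker S).index = (relResidual φ.ker S).index :=
    Nat.dvd_antisymm hd2 hd1
  have hkerg : g.ker = relResidual ψ.ker S := by
    refine (SimpleResidualAux.eq_of_le_of_index_eq hgker ?_ ?_).symm
    · rw [hkg, hieq]
    · rw [hkg]
      exact hDA.index_ne_zero
  exact ⟨FreeGroup A ⧸ relResidual φ.ker S, inferInstance, QuotientGroup.mk' _, g,
    QuotientGroup.mk'_surjective _, hgsurj, QuotientGroup.ker_mk' _, hkerg⟩
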